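/- Let w, r, t ∈ ℕ and 2 ≤ m ≤ |Δ^w_r|. Then N̄_t(m,w,r) = C(w + t − σ(m,w,r), w), where the binomial coefficient is taken to be 0 when t < σ(m,w,r). -/
import Mathlib


open scoped BigOperators Classical
open Filter

namespace TandemDup

variable {S : Type} [Fintype S] [DecidableEq S] [Ring S]

/-- A single tandem duplication with window length `k`:
`a = xyz` with `|y| = k` is mapped to `b = xyyz`. -/
def Dup (k : ℕ) (a b : List S) : Prop :=
  ∃ x y z : List S, y.length = k ∧ a = x ++ y ++ z ∧ b = x ++ y ++ y ++ z

/-- `DescN k t x y` : `y` is a `t`-descendant of `x`. -/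
def DescN (k : ℕ) : ℕ → List S → List S → Prop
  | 0, a, b => a = b
  | t + 1, a, b => ∃ c, DescN k t a c ∧ Dup k c b

/-- The set `D^t(x)` of `t`-descendants of `x`. -/
def DSet (k t : ℕ) (x : List S) : Set (List S) := {y | DescN k t x y}

/-- The descendant cone `D^*(x)`. -/
def DStar (k : ℕ) (x : List S) : Set (List S) := ⋃ t : ℕ, DSet k t x

/-- A string of length at least `k` is irreducible if it has no ancestor other than itself. -/
def Irred (k : ℕ) (x : List S) : Prop :=
  k ≤ x.length ∧ ∀ z : List S, x ∈ DStar k z → z = x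

/-- The duplication root `rt(y)`: an irreducible ancestor of `y` (unique, by the theory). -/
noncomputable def rt (k : ℕ) (y : List S) : List S :=
  if h : ∃ x : List S, Irred k x ∧ y ∈ DStar k x then h.choose else y

/-- The (non-anchor part of the) discrete derivative `φ̄(x)`. -/
def phiBar (k : ℕ) (x : List S) : List S :=
  (List.range (x.length - k)).map (fun i => x.getD (i + k) 0 - x.getD i 0)

/-- Hamming weight of a string: the number of its nonzero letters. -/
def wtH (l : List S) : ℕ := (l.filter (fun a => decide (a ≠ 0))).length

/-- `w(x) := wt_H(φ̄(x))`. -/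
def wgt (k : ℕ) (x : List S) : ℕ := wtH (phiBar k x)

/-- `r(x) := (|x| - |rt(x)|)/k`, the number of duplications taking `rt(x)` to `x`. -/
noncomputable def rr (k : ℕ) (x : List S) : ℕ := (x.length - (rt k x).length) / k

/-- The typicality condition on the weight `w`. -/
def wTypical (q k n w : ℕ) : Prop :=
  |(w : ℝ) - (((q : ℝ) - 1) / (q : ℝ)) * ((n : ℝ) - (k : ℝ))| < (n : ℝ) ^ ((3 : ℝ) / 4)

/-- The typicality condition on the number of duplications `r`. -/
def rTypical (q k n r : ℕ) : Prop :=
  |(r : ℝ) - (((q : ℝ) - 1) / ((q : ℝ) * ((q : ℝ) ^ k - 1))) * ((n : ℝ) - (k : ℝ))|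
    < 2 * (n : ℝ) ^ ((3 : ℝ) / 4)

/-- The typical set `typ^n`. -/
def typ (k n : ℕ) : Set (List S) :=
  {x | x.length = n ∧ wTypical (Fintype.card S) k n (wgt k x) ∧
    rTypical (Fintype.card S) k n (rr k x)}

/-- The uncertainty `N_t(m, C)`: the maximal size of `⋂ᵢ D^t(xᵢ)` over pairwise
distinct `x₁, …, x_m ∈ C`. -/
noncomputable def Nt (k t m : ℕ) (C : Set (List S)) : ℕ :=
  sSup { N : ℕ | ∃ f : Fin m → List S, Function.Injective f ∧ (∀ i, f i ∈ C) ∧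
    N = (⋂ i, DSet k t (f i)).ncard }

/-- `S̄_t(u₁, …, u_m) = ⋂ᵢ {v : v ≥ uᵢ, ‖v - uᵢ‖₁ = t}`. -/
def Sbar (w t : ℕ) {m : ℕ} (u : Fin m → (Fin (w + 1) → ℕ)) : Set (Fin (w + 1) → ℕ) :=
  ⋂ i, {v | u i ≤ v ∧ ∑ j, (v j - u i j) = t}

/-- `N̄_t(m, w, r)`. -/
noncomputable def Nbar (t m w r : ℕ) : ℕ :=
  sSup { N : ℕ | ∃ u : Fin m → (Fin (w + 1) → ℕ), Function.Injective u ∧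
    (∀ i, ∑ j, u i j = r) ∧ N = (Sbar w t u).ncard }

/-- The minimum supremum height `σ(m, w, r)`. -/
noncomputable def sigma (m w r : ℕ) : ℕ :=
  sInf { s : ℕ | ∃ u : Fin m → (Fin (w + 1) → ℕ), Function.Injective u ∧
    (∀ i, ∑ j, u i j = r) ∧ (∑ j, Finset.univ.sup fun i => u i j) = r + s }

/-- The lower-bounds set `A_r(u)`. -/
def lbs (w r : ℕ) (u : Fin (w + 1) → ℕ) : Set (Fin (w + 1) → ℕ) :=
  {v | (∑ j, v j) = r ∧ v ≤ u}

/-- The maximal lower-bounds-set size `μ(w, r, s)`. -/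
noncomputable def mu (w r s : ℕ) : ℕ :=
  sSup { N : ℕ | ∃ u : Fin (w + 1) → ℕ, (∑ j, u j) = r + s ∧ N = (lbs w r u).ncard }

/-- Twice the distance `d₁`, i.e. the `ℓ₁`-distance `‖u - v‖₁` on `ℕ^{w+1}`. -/
def l1dist {w : ℕ} (u v : Fin (w + 1) → ℕ) : ℕ :=
  ∑ j, ((u j - v j) + (v j - u j))

/-- `N̄_t(m, w, r, d)`. -/
noncomputable def NbarD (t m w r d : ℕ) : ℕ :=
  sSup { N : ℕ | ∃ u : Fin m → (Fin (w + 1) → ℕ),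
    (∀ i, ∑ j, u i j = r) ∧ (∀ i j, i ≠ j → 2 * d ≤ l1dist (u i) (u j)) ∧
    N = (Sbar w t u).ncard }

/-- `σ(m, w, r, d)`. -/
noncomputable def sigmaD (m w r d : ℕ) : ℕ :=
  sInf { s : ℕ | ∃ u : Fin m → (Fin (w + 1) → ℕ),
    (∀ i, ∑ j, u i j = r) ∧ (∀ i j, i ≠ j → 2 * d ≤ l1dist (u i) (u j)) ∧
    (∑ j, Finset.univ.sup fun i => u i j) = r + s }

/-- `μ(w, r, s, d)`. -/
noncomputable def muD (w r s d : ℕ) : ℕ :=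
  sSup { N : ℕ | ∃ u : Fin (w + 1) → ℕ, (∑ j, u j) = r + s ∧
    ∃ C : Set (Fin (w + 1) → ℕ), C ⊆ lbs w r u ∧
      (∀ v₁ ∈ C, ∀ v₂ ∈ C, v₁ ≠ v₂ → 2 * d ≤ l1dist v₁ v₂) ∧ N = C.ncard }

/-- The duplication distance `d(y₁, y₂)`. -/
noncomputable def distDup (k : ℕ) (y₁ y₂ : List S) : ℕ :=
  sInf {t : ℕ | (DSet k t y₁ ∩ DSet k t y₂).Nonempty}

/-- `N^typ_t(m, n, d)`. -/
noncomputable def NtypD (k t m n d : ℕ) : ℕ :=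
  sSup { N : ℕ | ∃ f : Fin m → List S, (∀ i, f i ∈ typ k n) ∧
    (∀ i j, i ≠ j → d ≤ distDup k (f i) (f j)) ∧
    N = (⋂ i, DSet k t (f i)).ncard }

/-- `A(ν, D, ω)`: the maximum size of a binary code of length `ν`, constant Hamming
weight `ω`, and minimum Hamming distance `D`. -/
noncomputable def Abin (ν D ω : ℕ) : ℕ :=
  sSup { N : ℕ | ∃ C : Set (Fin ν → ZMod 2), (∀ x ∈ C, hammingNorm x = ω) ∧
    (∀ x ∈ C, ∀ y ∈ C, x ≠ y → D ≤ hammingDist x y) ∧ N = C.ncard }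

/-- Zero-run-length representation: `ψ_x(y)` as a list, mapping `φ̄(y)` written as
`0^{u(1)} a₁ 0^{u(2)} … a_w 0^{u(w+1)}` (with the `aᵢ` nonzero) to
`(⌊u(1)/k⌋, …, ⌊u(w+1)/k⌋)`. -/
def psiList (k : ℕ) (y : List S) : List ℕ :=
  ((phiBar k y).splitOnP (fun a => decide (a ≠ 0))).map (fun run => run.length / k)

/-- `ψ_x(y)` as a vector in `ℕ^{w+1}`. -/
def psiVec (k w : ℕ) (y : List S) : Fin (w + 1) → ℕ := fun i => (psiList k y).getD i 0

/-- `s = ⌈log_n m⌉`. -/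
noncomputable def sExp (n m : ℕ) : ℕ := ⌈Real.logb n m⌉₊

/-- The indicator `δ(m, n)` of Theorem 17. -/
noncomputable def deltaTyp (q k n m : ℕ) : ℕ :=
  if ∀ r : ℕ, rTypical q k n r → Nat.choose (r + sExp n m) r < m then 1 else 0

/-- `s = ⌈log_n m⌉ + d - 1`. -/
noncomputable def sExpD (n m d : ℕ) : ℕ := sExp n m + (d - 1)

/-- The indicator `δ(m, n, d)` of Theorem 29. -/
noncomputable def deltaEcc (q k d n m : ℕ) : ℕ :=
  if ∀ r : ℕ, rTypical q k n r → Abin (r + sExpD n m d) (2 * d) (sExpD n m d) < m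
  then 1 else 0


private lemma arith1 {r S σ : ℕ} (h1 : r ≤ S) (h2 : σ ≤ S - r) : r + σ ≤ S := by omega

private lemma arith2 {σ t : ℕ} (h : σ ≤ t) (r w : ℕ) : r + t - (r + σ) + w = w + t - σ := by
  omega

private lemma arith3 {r σ S t w : ℕ} (h1 : r + σ ≤ S) (h2 : S ≤ r + t) :
    r + t - S + w ≤ w + t - σ := by omega

private lemma sum_sub_of_le {w : ℕ} {a v : Fin (w + 1) → ℕ} (h : a ≤ v) :
    ∑ j, (v j - a j) = (∑ j, v j) - (∑ j, a j) := by
  have : ∑ j, v j = (∑ j, a j) + ∑ j, (v j - a j) := by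
    rw [← Finset.sum_add_distrib]
    exact Finset.sum_congr rfl fun j _ => (Nat.add_sub_cancel' (h j)).symm
  omega

private lemma ncard_simplex (w M : ℕ) :
    {v : Fin (w + 1) → ℕ | ∑ j, v j = M}.ncard = (M + w).choose w := by
  have h1 : {v : Fin (w + 1) → ℕ | ∑ j, v j = M}.ncard
      = Nat.card {P : Fin (w + 1) → ℕ // ∑ i, P i = M} := rfl
  rw [h1, Nat.card_congr (Sym.equivNatSumOfFintype (Fin (w + 1)) M).symm,
    Nat.card_eq_fintype_card, Sym.card_sym_eq_choose, Fintype.card_fin]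
  have h2 : w + 1 + M - 1 = M + w := by clear h1; omega
  rw [h2, Nat.choose_symm_add]

private lemma ncard_upper (w N : ℕ) (a : Fin (w + 1) → ℕ) :
    {v : Fin (w + 1) → ℕ | a ≤ v ∧ ∑ j, v j = N}.ncard
      = if ∑ j, a j ≤ N then (N - ∑ j, a j + w).choose w else 0 := by
  by_cases h : ∑ j, a j ≤ N
  · rw [if_pos h]
    have himg : {v : Fin (w + 1) → ℕ | a ≤ v ∧ ∑ j, v j = N}
        = (fun d => a + d) '' {d | ∑ j, d j = N - ∑ j, a j} := by
      ext v
      constructor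
      · rintro ⟨hle, hsum⟩
        refine ⟨fun j => v j - a j, ?_, ?_⟩
        · simp only [Set.mem_setOf_eq]
          rw [sum_sub_of_le hle, hsum]
        · funext j; exact Nat.add_sub_cancel' (hle j)
      · rintro ⟨d, hd, rfl⟩
        refine ⟨fun j => Nat.le_add_right _ _, ?_⟩
        show ∑ j, (a j + d j) = N
        rw [Finset.sum_add_distrib, hd]
        exact Nat.add_sub_cancel' h
    rw [himg, Set.ncard_image_of_injective _ (add_right_injective a), ncard_simplex]
  · rw [if_neg h]
    convert Set.ncard_empty (Fin (w + 1) → ℕ)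
    ext v
    simp only [Set.mem_setOf_eq, Set.mem_empty_iff_false, iff_false, not_and]
    intro hle hsum
    exact h (hsum ▸ Finset.sum_le_sum fun j _ => hle j)

private lemma sbar_eq {w r t m : ℕ} (hm : 0 < m) (u : Fin m → Fin (w + 1) → ℕ)
    (hu : ∀ i, ∑ j, u i j = r) :
    Sbar w t u
      = {v | (fun j => Finset.univ.sup fun i => u i j) ≤ v ∧ ∑ j, v j = r + t} := by
  ext v
  simp only [Sbar, Set.mem_iInter, Set.mem_setOf_eq]
  constructor
  · intro h
    have i0 : Fin m := ⟨0, hm⟩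
    obtain ⟨hle0, hs0⟩ := h i0
    refine ⟨fun j => Finset.sup_le fun i _ => (h i).1 j, ?_⟩
    rw [sum_sub_of_le hle0, hu i0] at hs0
    have hge : r ≤ ∑ j, v j := (hu i0) ▸ Finset.sum_le_sum fun j _ => hle0 j
    omega
  · rintro ⟨hsup, hsum⟩ i
    have hle : u i ≤ v := fun j =>
      le_trans (Finset.le_sup (f := fun i' => u i' j) (Finset.mem_univ i)) (hsup j)
    refine ⟨hle, ?_⟩
    rw [sum_sub_of_le hle, hsum, hu i]
    omega

theorem statement5 (w r t m : ℕ) (hm : 2 ≤ m) (hm' : m ≤ Nat.choose (r + w) r) :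
    Nbar t m w r =
      if sigma m w r ≤ t then Nat.choose (w + t - sigma m w r) w else 0 := by
  have hm0 : 0 < m := by omega
  -- there is an injective family in the simplex
  have hexists : ∃ u : Fin m → (Fin (w + 1) → ℕ),
      Function.Injective u ∧ ∀ i, ∑ j, u i j = r := by
    letI : Fintype {P : Fin (w + 1) → ℕ // ∑ i, P i = r} :=
      Fintype.ofEquiv _ (Sym.equivNatSumOfFintype (Fin (w + 1)) r)
    have hc : Fintype.card (Fin m) ≤ Fintype.card {P : Fin (w + 1) → ℕ // ∑ i, P i = r} := by
      rw [Fintype.card_fin]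
      have : Nat.card {P : Fin (w + 1) → ℕ // ∑ i, P i = r} = (r + w).choose w := by
        rw [← ncard_simplex w r]; rfl
      rw [← Nat.card_eq_fintype_card, this]
      calc m ≤ (r + w).choose r := hm'
        _ = (r + w).choose w := Nat.choose_symm_add
    obtain ⟨f⟩ := Function.Embedding.nonempty_of_card_le hc
    exact ⟨fun i => (f i).1, fun i₁ i₂ h => f.injective (Subtype.ext h),
      fun i => (f i).2⟩
  -- the σ-defining set is nonempty
  have hsig_nonempty : { s : ℕ | ∃ u : Fin m → (Fin (w + 1) → ℕ), Function.Injective u ∧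
      (∀ i, ∑ j, u i j = r) ∧ (∑ j, Finset.univ.sup fun i => u i j) = r + s }.Nonempty := by
    obtain ⟨u, hinj, hsum⟩ := hexists
    have hge : r ≤ ∑ j, Finset.univ.sup fun i => u i j := by
      calc r = ∑ j, u ⟨0, hm0⟩ j := (hsum _).symm
        _ ≤ _ := Finset.sum_le_sum fun j _ =>
          Finset.le_sup (f := fun i => u i j) (Finset.mem_univ _)
    exact ⟨(∑ j, Finset.univ.sup fun i => u i j) - r, u, hinj, hsum,
      (Nat.add_sub_cancel' hge).symm⟩
  set σ₀ := sigma m w r with hσdef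
  obtain ⟨u₀, hinj₀, hsum₀, hsup₀⟩ := Nat.sInf_mem hsig_nonempty
  -- value of the intersection for any admissible family
  have key : ∀ u : Fin m → (Fin (w + 1) → ℕ), Function.Injective u →
      (∀ i, ∑ j, u i j = r) →
      (Sbar w t u).ncard =
        if (∑ j, Finset.univ.sup fun i => u i j) ≤ r + t then
          (r + t - (∑ j, Finset.univ.sup fun i => u i j) + w).choose w else 0 := by
    intro u hinj hsum
    rw [sbar_eq hm0 u hsum, ncard_upper]
  -- lower bound on the supremum sum for any admissible family
  have hsig_le : ∀ u : Fin m → (Fin (w + 1) → ℕ), Function.Injective u →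
      (∀ i, ∑ j, u i j = r) → r + σ₀ ≤ ∑ j, Finset.univ.sup fun i => u i j := by
    intro u hinj hsum
    have hge : r ≤ ∑ j, Finset.univ.sup fun i => u i j := by
      calc r = ∑ j, u ⟨0, hm0⟩ j := (hsum _).symm
        _ ≤ _ := Finset.sum_le_sum fun j _ =>
          Finset.le_sup (f := fun i => u i j) (Finset.mem_univ _)
    have hmem' : (∑ j, Finset.univ.sup fun i => u i j) - r ∈
        { s : ℕ | ∃ u : Fin m → (Fin (w + 1) → ℕ), Function.Injective u ∧
          (∀ i, ∑ j, u i j = r) ∧ (∑ j, Finset.univ.sup fun i => u i j) = r + s } :=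
      ⟨u, hinj, hsum, (Nat.add_sub_cancel' hge).symm⟩
    exact arith1 hge (Nat.sInf_le hmem')
  set target := if σ₀ ≤ t then Nat.choose (w + t - σ₀) w else 0 with htar
  -- target is attained
  have hmem : target ∈ { N : ℕ | ∃ u : Fin m → (Fin (w + 1) → ℕ), Function.Injective u ∧
      (∀ i, ∑ j, u i j = r) ∧ N = (Sbar w t u).ncard } := by
    refine ⟨u₀, hinj₀, hsum₀, ?_⟩
    have hsup₀' : (∑ j, Finset.univ.sup fun i => u₀ i j) = r + σ₀ := hsup₀
    rw [key u₀ hinj₀ hsum₀, hsup₀', htar]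
    by_cases hc : σ₀ ≤ t
    · rw [if_pos hc, if_pos (Nat.add_le_add_left hc r)]
      congr 1
      exact (arith2 hc r w).symm
    · rw [if_neg hc, if_neg fun h => hc (le_of_add_le_add_left h)]
  -- target is an upper bound
  have hub : ∀ N ∈ { N : ℕ | ∃ u : Fin m → (Fin (w + 1) → ℕ), Function.Injective u ∧
      (∀ i, ∑ j, u i j = r) ∧ N = (Sbar w t u).ncard }, N ≤ target := by
    rintro N ⟨u, hinj, hsum, rfl⟩
    rw [key u hinj hsum]
    have hs := hsig_le u hinj hsum
    by_cases hc : (∑ j, Finset.univ.sup fun i => u i j) ≤ r + t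
    · rw [if_pos hc, htar, if_pos (le_of_add_le_add_left (hs.trans hc))]
      exact Nat.choose_le_choose w (arith3 hs hc)
    · rw [if_neg hc]
      exact Nat.zero_le _
  exact le_antisymm (csSup_le ⟨target, hmem⟩ hub) (le_csSup ⟨target, hub⟩ hmem)

end TandemDup
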